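/- Let C be a nonempty finite set of vectors x = (x₁,…,xₙ) ∈ ℕⁿ satisfying 0 ≤ xᵢ ≤ dᵢ and Σᵢ xᵢ = k, where d₁,…,dₙ ∈ ℕ with m = Σᵢ dᵢ > k. Let x̂ minimize OPT_LIN(x) = Σᵢ xᵢ·log₂ dᵢ over C and let x* minimize OPT_ENT(x) = −Σᵢ (dᵢ-xᵢ)·log₂((dᵢ-xᵢ)/(m-k)) over C. Then OPT_ENT(x̂) ≤ OPT_ENT(x*) + k/ln 2. -/

import Mathlib

private lemma lemA (a b : ℕ) (h : a ≤ b) :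
    ((b:ℝ)-a) * Real.logb 2 ((b:ℝ)-a) ≤ ((b:ℝ)-a) * Real.logb 2 b := by
  rcases eq_or_lt_of_le h with rfl | hlt
  · simp
  · have ht : (0:ℝ) < (b:ℝ) - a := by
      have : (a:ℝ) < b := by exact_mod_cast hlt
      linarith
    have hle : ((b:ℝ)-a) ≤ b := by
      have : (0:ℝ) ≤ a := Nat.cast_nonneg a
      linarith
    exact mul_le_mul_of_nonneg_left (Real.logb_le_logb_of_le one_lt_two ht hle) ht.le

private lemma lemB (a b : ℕ) (h : a ≤ b) :
    ((b:ℝ)-a) * Real.logb 2 (b:ℝ) - ((b:ℝ)-a) * Real.logb 2 ((b:ℝ)-a)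
      ≤ (a:ℝ) / Real.log 2 := by
  have hlog2 : 0 < Real.log 2 := Real.log_pos one_lt_two
  rcases eq_or_lt_of_le h with rfl | hlt
  · simp [div_nonneg (Nat.cast_nonneg a) hlog2.le]
  · have ht : (0:ℝ) < (b:ℝ) - a := by
      have : (a:ℝ) < b := by exact_mod_cast hlt
      linarith
    have hb : (0:ℝ) < b := by
      have : (0:ℝ) ≤ a := Nat.cast_nonneg a
      linarith
    have key : Real.log ((b:ℝ)/((b:ℝ)-a)) ≤ (b:ℝ)/((b:ℝ)-a) - 1 :=
      Real.log_le_sub_one_of_pos (by positivity)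
    have h1 : (b:ℝ)/((b:ℝ)-a) - 1 = (a:ℝ)/((b:ℝ)-a) := by
      field_simp
      ring
    have key' : Real.log ((b:ℝ)/((b:ℝ)-a)) ≤ (a:ℝ)/((b:ℝ)-a) := by rw [← h1]; exact key
    have h2 : ((b:ℝ)-a) * Real.log ((b:ℝ)/((b:ℝ)-a)) ≤ a := by
      have := mul_le_mul_of_nonneg_left key' ht.le
      calc ((b:ℝ)-a) * Real.log ((b:ℝ)/((b:ℝ)-a)) ≤ ((b:ℝ)-a) * ((a:ℝ)/((b:ℝ)-a)) := this
        _ = a := by field_simp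
    have h3 : ((b:ℝ)-a) * Real.logb 2 (b:ℝ) - ((b:ℝ)-a) * Real.logb 2 ((b:ℝ)-a)
        = ((b:ℝ)-a) * Real.log ((b:ℝ)/((b:ℝ)-a)) / Real.log 2 := by
      rw [Real.log_div hb.ne' ht.ne', Real.logb, Real.logb]
      ring
    rw [h3]
    exact div_le_div_of_nonneg_right h2 hlog2.le

theorem lin_minimizer_approximates_ent (n k m : ℕ) (d : Fin n → ℕ)
    (hm : m = ∑ i, d i) (hkm : k < m)
    (C : Finset (Fin n → ℕ)) (hC : C.Nonempty)
    (hmem : ∀ x ∈ C, (∀ i, x i ≤ d i) ∧ ∑ i, x i = k)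
    (xhat xstar : Fin n → ℕ) (hxhat : xhat ∈ C) (hxstar : xstar ∈ C)
    (hlin : ∀ y ∈ C, ∑ i, (xhat i : ℝ) * Real.logb 2 (d i)
      ≤ ∑ i, (y i : ℝ) * Real.logb 2 (d i))
    (hent : ∀ y ∈ C,
      (-∑ i, ((d i : ℝ) - xstar i) * Real.logb 2 (((d i : ℝ) - xstar i) / ((m : ℝ) - k)))
        ≤ -∑ i, ((d i : ℝ) - y i) * Real.logb 2 (((d i : ℝ) - y i) / ((m : ℝ) - k))) :
    (-∑ i, ((d i : ℝ) - xhat i) * Real.logb 2 (((d i : ℝ) - xhat i) / ((m : ℝ) - k)))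
      ≤ (-∑ i, ((d i : ℝ) - xstar i) * Real.logb 2 (((d i : ℝ) - xstar i) / ((m : ℝ) - k)))
        + k / Real.log 2 := by
  have hcpos : (0:ℝ) < (m:ℝ) - k := by
    have : (k:ℝ) < m := by exact_mod_cast hkm
    linarith
  -- expansion of entropy
  have expand : ∀ x ∈ C, ∑ i, ((d i:ℝ) - x i) * Real.logb 2 (((d i:ℝ) - x i)/((m:ℝ)-k))
      = ∑ i, ((d i:ℝ) - x i) * Real.logb 2 ((d i:ℝ) - x i)
        - ((m:ℝ)-k) * Real.logb 2 ((m:ℝ)-k) := by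
    intro x hx
    obtain ⟨hle, hsum⟩ := hmem x hx
    have hsumc : ∑ i, ((d i:ℝ) - (x i:ℝ)) = (m:ℝ) - k := by
      rw [Finset.sum_sub_distrib]
      have h1 : ∑ i, ((d i:ℝ)) = (m:ℝ) := by rw [hm]; push_cast; ring
      have h2 : ∑ i, ((x i:ℝ)) = (k:ℝ) := by rw [← hsum]; push_cast; ring
      rw [h1, h2]
    have : ∀ i ∈ Finset.univ, ((d i:ℝ) - x i) * Real.logb 2 (((d i:ℝ) - x i)/((m:ℝ)-k))
        = ((d i:ℝ) - x i) * Real.logb 2 ((d i:ℝ) - x i)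
          - ((d i:ℝ) - x i) * Real.logb 2 ((m:ℝ)-k) := by
      intro i _
      by_cases h : ((d i:ℝ) - x i) = 0
      · simp [h]
      · rw [Real.logb_div h hcpos.ne']; ring
    rw [Finset.sum_congr rfl this, Finset.sum_sub_distrib, ← Finset.sum_mul, hsumc]
  rw [expand xhat hxhat, expand xstar hxstar]
  have hle1 := (hmem xhat hxhat).1
  have hle2 := (hmem xstar hxstar).1
  have hsumk : ∑ i, (xhat i : ℝ) = (k:ℝ) := by
    rw [← (hmem xhat hxhat).2]; push_cast; ring
  -- suffices: g(xstar) ≤ g(xhat) + k/ln2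
  have main : ∑ i, ((d i:ℝ) - xstar i) * Real.logb 2 ((d i:ℝ) - xstar i)
      ≤ ∑ i, ((d i:ℝ) - xhat i) * Real.logb 2 ((d i:ℝ) - xhat i) + (k:ℝ) / Real.log 2 := by
    have s1 : ∑ i, ((d i:ℝ) - xstar i) * Real.logb 2 ((d i:ℝ) - xstar i)
        ≤ ∑ i, ((d i:ℝ) - xstar i) * Real.logb 2 (d i) :=
      Finset.sum_le_sum (fun i _ => lemA (xstar i) (d i) (hle2 i))
    have s2 : ∑ i, ((d i:ℝ) - xstar i) * Real.logb 2 (d i)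
        ≤ ∑ i, ((d i:ℝ) - xhat i) * Real.logb 2 (d i) := by
      have h := hlin xstar hxstar
      have e1 : ∀ y : Fin n → ℕ, ∑ i, ((d i:ℝ) - y i) * Real.logb 2 (d i)
          = ∑ i, (d i:ℝ) * Real.logb 2 (d i) - ∑ i, (y i:ℝ) * Real.logb 2 (d i) := by
        intro y
        rw [← Finset.sum_sub_distrib]
        exact Finset.sum_congr rfl (fun i _ => by ring)
      rw [e1, e1]
      linarith
    have s3 : ∑ i, ((d i:ℝ) - xhat i) * Real.logb 2 (d i)
        ≤ ∑ i, ((d i:ℝ) - xhat i) * Real.logb 2 ((d i:ℝ) - xhat i) + (k:ℝ) / Real.log 2 := by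
      have h := Finset.sum_le_sum (fun i (_ : i ∈ Finset.univ) => lemB (xhat i) (d i) (hle1 i))
      rw [Finset.sum_sub_distrib, ← Finset.sum_div, hsumk] at h
      linarith
    linarith
  linarith
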